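/- arXiv:2006.03281 — 3 statements merged into one kernel-verified Lean document; each statement's English description precedes it below -/
import Mathlib

section
/- Let G be a σ-compact locally compact group and K a compact subgroup. Suppose Φ ∈ L¹(Ω, μ) and f ∈ C(G/K) satisfies f(ẋ) → l as ẋ → ∞ (i.e., for every ε > 0 there is a compact set C ⊂ G/K with |f(ẋ) − l| < ε outside C). If ∫_Ω Φ dμ = 1, then H f(ẋ) = ∫_Ω Φ(u) f(Ȧ(u)(ẋ)) dμ(u) → l as ẋ → ∞. Conversely, if H f(ẋ) → l for all such f, then ∫_Ω Φ dμ = 1. -/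
open MeasureTheory Filter Topology

lemma cocompact_isCountablyGenerated_aux {X : Type*} [TopologicalSpace X]
    [SigmaCompactSpace X] [WeaklyLocallyCompactSpace X] :
    (Filter.cocompact X).IsCountablyGenerated := by
  let E := CompactExhaustion.choice X
  have hb : (Filter.cocompact X).HasBasis (fun _ : ℕ => True) (fun n => (E n)ᶜ) := by
    refine Filter.hasBasis_cocompact.to_hasBasis ?_ ?_
    · intro s hs
      obtain ⟨n, hn⟩ := E.exists_superset_of_isCompact hs
      exact ⟨n, trivial, Set.compl_subset_compl.2 hn⟩
    · intro n _
      exact ⟨E n, E.isCompact n, subset_rfl⟩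
  exact hb.isCountablyGenerated

/-- Proposition 1: over a σ-compact locally compact group `G` and
compact subgroup `K`, the Hausdorff operator `H` with integrable kernel `Φ` is
regular — i.e. maps every continuous `f` on `G/K` with `f(ẋ) → l` at infinity to
a function tending to `l` at infinity — if and only if `∫_Ω Φ dμ = 1`. -/
theorem hausdorff_regular_iff
    {G : Type*} [Group G] [TopologicalSpace G] [IsTopologicalGroup G]
    [LocallyCompactSpace G] [SigmaCompactSpace G] [T2Space G]
    (K : Subgroup G) (hK : IsCompact (K : Set G))
    (hnc : (Filter.cocompact (G ⧸ K)).NeBot)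
    [MeasurableSpace (G ⧸ K)] [BorelSpace (G ⧸ K)]
    {Ω : Type*} [MeasurableSpace Ω] (μ : Measure Ω)
    (A : Ω → G ≃ₜ G)
    (hAhom : ∀ u, ∀ x y : G, A u (x * y) = A u x * A u y)
    (hAK : ∀ u, (A u : G → G) '' (K : Set G) = (K : Set G))
    (Adot : Ω → (G ⧸ K) ≃ₜ (G ⧸ K))
    (hAdot : ∀ u (x : G), Adot u (QuotientGroup.mk x) = QuotientGroup.mk (A u x))
    (hAdotmeas : ∀ x : G ⧸ K, Measurable fun u => Adot u x)
    (Φ : Ω → ℝ) (hΦ : Integrable Φ μ) :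
    (∫ u, Φ u ∂μ) = 1 ↔
      ∀ (f : G ⧸ K → ℝ) (l : ℝ), Continuous f →
        Tendsto f (cocompact (G ⧸ K)) (𝓝 l) →
        Tendsto (fun x => ∫ u, Φ u * f (Adot u x) ∂μ)
          (cocompact (G ⧸ K)) (𝓝 l) := by
  haveI : SigmaCompactSpace (G ⧸ K) := by
    rw [← isSigmaCompact_univ_iff]
    have h := isSigmaCompact_range (continuous_quot_mk : Continuous (Quot.mk _ : G → G ⧸ K))
    rwa [Set.range_eq_univ.2 (Quot.mk_surjective)] at h
  haveI : (Filter.cocompact (G ⧸ K)).IsCountablyGenerated :=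
    cocompact_isCountablyGenerated_aux
  constructor
  · intro h1 f l hf hfl
    -- f is bounded
    obtain ⟨C, hC, hCb⟩ : ∃ C : Set (G ⧸ K), IsCompact C ∧ ∀ x ∉ C, |f x - l| < 1 := by
      have := (Filter.hasBasis_cocompact.tendsto_iff (Metric.nhds_basis_ball)).1 hfl 1
        one_pos
      obtain ⟨C, hC, h⟩ := this
      exact ⟨C, hC, fun x hx => by
        have := h x hx
        simpa [Real.dist_eq] using this⟩
    obtain ⟨M₀, hM₀⟩ := hC.exists_bound_of_continuousOn hf.continuousOn
    set M : ℝ := max M₀ (|l| + 1) with hM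
    have hfb : ∀ x, |f x| ≤ M := by
      intro x
      by_cases hx : x ∈ C
      · exact le_trans (hM₀ x hx) (le_max_left _ _)
      · have := hCb x hx
        have : |f x| ≤ |l| + 1 := by
          have h2 : |f x| - |l| ≤ |f x - l| := by
            simpa using abs_sub_abs_le_abs_sub (f x) l
          linarith
        exact le_trans this (le_max_right _ _)
    have hlim : Tendsto (fun x => ∫ u, Φ u * f (Adot u x) ∂μ) (cocompact (G ⧸ K))
        (𝓝 (∫ u, Φ u * l ∂μ)) := by
      apply tendsto_integral_filter_of_dominated_convergence (fun u => |Φ u| * M)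
      · filter_upwards with x
        exact hΦ.aestronglyMeasurable.mul
          ((hf.measurable.comp (hAdotmeas x)).aestronglyMeasurable)
      · filter_upwards with x
        filter_upwards with u
        rw [Real.norm_eq_abs, abs_mul]
        exact mul_le_mul_of_nonneg_left (hfb _) (abs_nonneg _)
      · exact hΦ.abs.mul_const M
      · filter_upwards with u
        have hAc : Tendsto (Adot u) (cocompact (G ⧸ K)) (cocompact (G ⧸ K)) :=
          (Adot u).isClosedEmbedding.tendsto_cocompact
        exact (hfl.comp hAc).const_mul (Φ u)
    have : (∫ u, Φ u * l ∂μ) = l := by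
      rw [integral_mul_const, h1, one_mul]
    rwa [this] at hlim
  · intro h
    have h1 := h (fun _ => 1) 1 continuous_const tendsto_const_nhds
    simp only [mul_one] at h1
    exact tendsto_nhds_unique tendsto_const_nhds h1
end

section
/- Let G be a metric locally compact group with left invariant metric ρ, K a compact subgroup, and a a (1,∞)-atom on G supported in the ball B(e, r_B). Then the averaged function a'(x) := c ∫_K a(xk) dk, with c = ν(B(e, r_B))/ν(B(e, r'_B)) and r'_B = r_B + dist(e, K) (where dist is measured via ρ), is a right-K-invariant function supported in B(e, r'_B) satisfying ‖a'‖_∞ ≤ 1/ν(B(e, r'_B)) and ∫_G a' dν = 0; i.e., a' is a right-K-invariant (1,∞)-atom. -/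
open MeasureTheory Metric
open scoped ENNReal NNReal

/-- averaging a `(1,∞)`-atom `a` supported in `B(e, r_B)` over
the compact subgroup `K` (with normalized Haar measure `β`), and multiplying by
`c = ν(B(e,r_B))/ν(B(e,r'_B))` where `r'_B = r_B + dist(e,K)` (the distance
measured via `ρ`, i.e. the largest distance from `e` to a point of `K`),
produces a right-`K`-invariant `(1,∞)`-atom `a'` supported in `B(e, r'_B)` with
`‖a'‖_∞ ≤ 1/ν(B(e,r'_B))` and `∫_G a' dν = 0`. -/
theorem averaged_atom_is_K_invariant_atom
    {G : Type*} [Group G] [MetricSpace G] [IsTopologicalGroup G]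
    [LocallyCompactSpace G] [ProperSpace G] [MeasurableSpace G] [BorelSpace G]
    (hinvmetric : ∀ g x y : G, dist (g * x) (g * y) = dist x y)
    (ν : Measure G) [ν.IsHaarMeasure]
    (K : Subgroup G) (hK : IsCompact (K : Set G))
    (β : Measure K) [IsProbabilityMeasure β]
    (hβright : ∀ (k₀ : K) (g : K → ℝ), ∫ k, g (k * k₀) ∂β = ∫ k, g k ∂β)
    (a : G → ℝ) (hameas : Measurable a) (haint : Integrable a ν)
    (rB : ℝ) (hrB : 0 < rB)
    (hsupp : ∀ y, y ∉ ball (1 : G) rB → a y = 0)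
    (hbound : ∀ y, |a y| ≤ ((ν (ball (1 : G) rB)).toReal)⁻¹)
    (hcancel : ∫ y, a y ∂ν = 0)
    (r' : ℝ)
    (hr' : r' = rB + sSup ((fun k : G => dist (1 : G) k) '' (K : Set G)))
    (c : ℝ)
    (hc : c = (ν (ball (1 : G) rB)).toReal / (ν (ball (1 : G) r')).toReal) :
    (∀ (x : G), ∀ k ∈ K, (c * ∫ k' : K, a (x * k * k') ∂β) =
        c * ∫ k' : K, a (x * k') ∂β) ∧
    (∀ x, x ∉ ball (1 : G) r' → (c * ∫ k' : K, a (x * k') ∂β) = 0) ∧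
    (∀ x, |c * ∫ k' : K, a (x * k') ∂β| ≤ ((ν (ball (1 : G) r')).toReal)⁻¹) ∧
    ∫ x, (c * ∫ k' : K, a (x * k') ∂β) ∂ν = 0 := by
  haveI : CompactSpace K := isCompact_iff_compactSpace.mp hK
  haveI : BorelSpace K := Subtype.borelSpace (K : Set G)
  -- β is right invariant
  haveI hβr : β.IsMulRightInvariant := by
    constructor
    intro k₀
    ext s hs
    rw [Measure.map_apply (measurable_mul_const k₀) hs]
    have h1 := hβright k₀ (Set.indicator s (1 : K → ℝ))
    have h2 : ∀ k : K, Set.indicator s (1 : K → ℝ) (k * k₀)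
        = Set.indicator ((· * k₀) ⁻¹' s) (1 : K → ℝ) k := by
      intro k; rfl
    simp_rw [h2] at h1
    rw [MeasureTheory.integral_indicator_one ((measurable_mul_const k₀) hs),
      MeasureTheory.integral_indicator_one hs] at h1
    exact (ENNReal.toReal_eq_toReal_iff' (measure_ne_top β _) (measure_ne_top β _)).mp h1
  -- β equals the Haar measure on K, hence is left invariant
  haveI hβl : β.IsMulLeftInvariant := by
    set μK : Measure K := Measure.haarMeasure (⊤ : TopologicalSpace.PositiveCompacts K) with hμK
    haveI : IsProbabilityMeasure μK := ⟨by
      rw [← TopologicalSpace.PositiveCompacts.coe_top (α := K)]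
      exact Measure.haarMeasure_self⟩
    have huniq : ∀ m : Measure K, IsProbabilityMeasure m → m.IsMulLeftInvariant → m = μK := by
      intro m hm hml
      haveI := hm; haveI := hml
      have h := Measure.isMulInvariant_eq_smul_of_compactSpace m μK
      have huniv : ((Measure.haarScalarFactor m μK : ℝ≥0) : ℝ≥0∞) = 1 := by
        have h2 := congrArg (fun m' : Measure K => m' Set.univ) h
        simp only [Measure.smul_apply, measure_univ, ENNReal.smul_def, smul_eq_mul, mul_one] at h2
        exact h2.symm
      have hc1 : Measure.haarScalarFactor m μK = 1 := by exact_mod_cast huniv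
      rw [h, hc1, one_smul]
    haveI : IsProbabilityMeasure β.inv := ⟨by
      rw [Measure.inv_apply, Set.inv_univ]; exact measure_univ⟩
    have hinv : β.inv = μK := huniq β.inv inferInstance inferInstance
    haveI : μK.IsMulRightInvariant := by
      constructor
      intro g
      haveI : IsProbabilityMeasure (Measure.map (· * g) μK) :=
        Measure.isProbabilityMeasure_map (measurable_mul_const g).aemeasurable
      exact huniq _ inferInstance inferInstance
    have hβeq : β = μK.inv := by rw [← Measure.inv_inv β, hinv]
    rw [hβeq]
    infer_instance
  -- geometry
  set S := sSup ((fun k : G => dist (1 : G) k) '' (K : Set G)) with hS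
  have hSbdd : BddAbove ((fun k : G => dist (1 : G) k) '' (K : Set G)) :=
    (hK.image (continuous_const.dist continuous_id)).bddAbove
  have hSle : ∀ k : K, dist (1 : G) (k : G) ≤ S :=
    fun k => le_csSup hSbdd ⟨k, k.2, rfl⟩
  have hS0 : 0 ≤ S := by simpa using hSle 1
  have hr'pos : 0 < r' := by rw [hr']; linarith
  have hgeom : ∀ x : G, x ∉ ball (1 : G) r' → ∀ k' : K, a (x * (k' : G)) = 0 := by
    intro x hx k'
    apply hsupp
    intro hmem
    apply hx
    rw [mem_ball] at hmem ⊢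
    have h1 : dist x (x * (k' : G)) = dist (1 : G) (k' : G) := by
      have := hinvmetric x 1 (k' : G); simpa using this
    have h2 : dist x 1 ≤ dist x (x * (k' : G)) + dist (x * (k' : G)) 1 := dist_triangle _ _ _
    have h3 := hSle k'
    rw [hr']
    rw [h1] at h2
    linarith
  -- measure positivity / finiteness
  have hνB_fin : ν (ball (1 : G) rB) < ⊤ := measure_ball_lt_top
  have hνB'_fin : ν (ball (1 : G) r') < ⊤ := measure_ball_lt_top
  have hνB_pos : 0 < (ν (ball (1 : G) rB)).toReal :=
    ENNReal.toReal_pos (measure_ball_pos ν 1 hrB).ne' hνB_fin.ne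
  have hνB'_pos : 0 < (ν (ball (1 : G) r')).toReal :=
    ENNReal.toReal_pos (measure_ball_pos ν 1 hr'pos).ne' hνB'_fin.ne
  set M : ℝ := ((ν (ball (1 : G) rB)).toReal)⁻¹ with hM
  have hM0 : 0 ≤ M := inv_nonneg.mpr (le_of_lt hνB_pos)
  have hc0 : 0 ≤ c := by rw [hc]; positivity
  have hcM : c * M = ((ν (ball (1 : G) r')).toReal)⁻¹ := by
    rw [hc, hM]; field_simp
  refine ⟨?_, ?_, ?_, ?_⟩
  · -- right K-invariance
    intro x k hk
    congr 1
    have := integral_mul_left_eq_self (μ := β) (fun j : K => a (x * (j : G))) ⟨k, hk⟩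
    calc ∫ k' : K, a (x * k * (k' : G)) ∂β
        = ∫ k' : K, (fun j : K => a (x * (j : G))) ((⟨k, hk⟩ : K) * k') ∂β := by
          congr 1 with k'
          simp [mul_assoc]
      _ = ∫ j : K, a (x * (j : G)) ∂β := this
  · intro x hx
    have : ∀ k' : K, a (x * (k' : G)) = 0 := hgeom x hx
    simp [this]
  · intro x
    rw [abs_mul, abs_of_nonneg hc0]
    have hb : |∫ k' : K, a (x * (k' : G)) ∂β| ≤ M := by
      have := norm_integral_le_of_norm_le_const (μ := β)
        (f := fun k' : K => a (x * (k' : G))) (C := M)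
        (Filter.Eventually.of_forall fun k' => by
          simpa using hbound (x * (k' : G)))
      simpa [measure_univ] using this
    calc c * |∫ k' : K, a (x * (k' : G)) ∂β| ≤ c * M :=
          mul_le_mul_of_nonneg_left hb hc0
      _ = ((ν (ball (1 : G) r')).toReal)⁻¹ := hcM
  · -- cancellation
    have htrans : ∀ g : G, ∫ x, a (x * g) ∂ν = 0 := by
      intro g
      haveI : IsFiniteMeasureOnCompacts (Measure.map (· * g) ν) := by
        constructor
        intro s hs
        rw [Measure.map_apply (measurable_mul_const g) hs.measurableSet]
        have hpre : (· * g) ⁻¹' s = (· * g⁻¹) '' s := by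
          ext y
          simp only [Set.mem_preimage, Set.mem_image]
          constructor
          · intro hy; exact ⟨y * g, hy, by group⟩
          · rintro ⟨z, hz, rfl⟩; simpa [mul_assoc] using hz
        rw [hpre]
        exact (hs.image (continuous_mul_right g⁻¹)).measure_lt_top
      have key := Measure.isMulLeftInvariant_eq_smul (Measure.map (· * g) ν) ν
      have h1 : ∫ x, a (x * g) ∂ν = ∫ y, a y ∂(Measure.map (· * g) ν) :=
        (integral_map (measurable_mul_const g).aemeasurable
          hameas.aestronglyMeasurable).symm
      rw [h1, key, integral_smul_nnreal_measure, hcancel, smul_zero]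
    simp_rw [integral_const_mul]
    have hswap : ∫ x, ∫ k' : K, a (x * (k' : G)) ∂β ∂ν
        = ∫ k' : K, ∫ x, a (x * (k' : G)) ∂ν ∂β := by
      apply integral_integral_swap
      have hmeas : Measurable (fun p : G × K => a (p.1 * (p.2 : G))) :=
        hameas.comp (measurable_fst.mul (measurable_subtype_coe.comp measurable_snd))
      have hg : Integrable (fun p : G × K =>
          (ball (1 : G) r' ×ˢ (Set.univ : Set K)).indicator (fun _ => M) p) (ν.prod β) := by
        rw [integrable_indicator_iff (measurableSet_ball.prod MeasurableSet.univ)]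
        refine (integrableOn_const_iff (C := M)).mpr (Or.inr ?_)
        rw [Measure.prod_prod, measure_univ, mul_one]
        exact hνB'_fin
      refine hg.mono' hmeas.aestronglyMeasurable ?_
      refine Filter.Eventually.of_forall ?_
      rintro ⟨x, k'⟩
      by_cases hp : x ∈ ball (1 : G) r'
      · rw [Set.indicator_of_mem (by exact ⟨hp, trivial⟩)]
        simpa [Function.uncurry] using hbound (x * (k' : G))
      · rw [Set.indicator_of_notMem (by simp [Set.mem_prod, hp])]
        simp [Function.uncurry, hgeom x hp k']
    rw [hswap]
    simp_rw [htrans]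
    simp
end

section
/- Under the assumptions of the Hausdorff boundedness theorem on L^p(G/K), the discrete Hausdorff operator H f(ẋ) = Σ_{j=0}^∞ Φ(j) f(Ȧ(j)(ẋ)) satisfies ‖H‖_{L(L^p(G/K))} ≤ Σ_{j=0}^∞ |Φ(j)| (mod A(j))^{-1/p}, provided the right-hand side is finite. -/
open MeasureTheory ENNReal NNReal

private lemma lintegral_Lp_sum_le' {α : Type*} [MeasurableSpace α] {μ : Measure α} {p : ℝ}
    (hp : 1 ≤ p) (g : ℕ → α → ℝ≥0∞) (hg : ∀ j, AEMeasurable (g j) μ) (n : ℕ) :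
    (∫⁻ x, (∑ j ∈ Finset.range n, g j x) ^ p ∂μ) ^ (1 / p) ≤
      ∑ j ∈ Finset.range n, (∫⁻ x, (g j x) ^ p ∂μ) ^ (1 / p) := by
  have hp0 : 0 < p := lt_of_lt_of_le one_pos hp
  induction n with
  | zero =>
      simp [ENNReal.zero_rpow_of_pos (by positivity : (0:ℝ) < 1 / p), hp0]
  | succ n ih =>
      have hsum : AEMeasurable (fun x => ∑ j ∈ Finset.range n, g j x) μ :=
        Finset.aemeasurable_fun_sum _ fun j _ => hg j
      calc (∫⁻ x, (∑ j ∈ Finset.range (n+1), g j x) ^ p ∂μ) ^ (1 / p)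
          = (∫⁻ x, ((fun x => ∑ j ∈ Finset.range n, g j x) + g n) x ^ p ∂μ) ^ (1 / p) := by
            simp [Finset.sum_range_succ]
        _ ≤ (∫⁻ x, (∑ j ∈ Finset.range n, g j x) ^ p ∂μ) ^ (1/p)
              + (∫⁻ x, (g n x) ^ p ∂μ) ^ (1/p) :=
            ENNReal.lintegral_Lp_add_le hsum (hg n) hp
        _ ≤ _ := by rw [Finset.sum_range_succ]; exact add_le_add ih le_rfl

private lemma lintegral_Lp_tsum_le' {α : Type*} [MeasurableSpace α] {μ : Measure α} {p : ℝ}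
    (hp : 1 ≤ p) (g : ℕ → α → ℝ≥0∞) (hg : ∀ j, AEMeasurable (g j) μ) :
    (∫⁻ x, (∑' j, g j x) ^ p ∂μ) ^ (1 / p) ≤ ∑' j, (∫⁻ x, (g j x) ^ p ∂μ) ^ (1 / p) := by
  have hp0 : 0 < p := lt_of_lt_of_le one_pos hp
  have hmono : ∀ x, Monotone fun n => ∑ j ∈ Finset.range n, g j x := fun x m n hmn =>
    Finset.sum_le_sum_of_subset (Finset.range_subset_range.2 hmn)
  have key : (∫⁻ x, (∑' j, g j x) ^ p ∂μ)
      = ⨆ n, ∫⁻ x, (∑ j ∈ Finset.range n, g j x) ^ p ∂μ := by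
    rw [← lintegral_iSup' (fun n => (Finset.aemeasurable_fun_sum _ fun j _ => hg j).pow_const p)
      (Filter.Eventually.of_forall fun x m n hmn => ENNReal.rpow_le_rpow (hmono x hmn) hp0.le)]
    congr 1; funext x
    rw [ENNReal.tsum_eq_iSup_nat]
    exact Monotone.map_iSup_of_continuousAt (ENNReal.continuous_rpow_const.continuousAt)
      (fun a b hab => ENNReal.rpow_le_rpow hab hp0.le) (by simp [ENNReal.zero_rpow_of_pos hp0])
  rw [key, one_div, ENNReal.rpow_inv_le_iff hp0, iSup_le_iff]
  intro n
  rw [← ENNReal.rpow_inv_le_iff hp0, ← one_div]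
  exact (lintegral_Lp_sum_le' hp g hg n).trans (ENNReal.sum_le_tsum _)

/-- Corollary 1: the discrete Hausdorff operator
`Hf(ẋ) = Σ_j Φ(j) f(Ȧ(j)(ẋ))` is bounded on `L^p(G/K)` with norm at most
`Σ_j |Φ(j)| (mod A(j))^{-1/p}`, whenever this sum is finite. -/
theorem discrete_hausdorff_bounded_Lp_quotient
    {G : Type*} [Group G] [TopologicalSpace G] [IsTopologicalGroup G]
    [LocallyCompactSpace G] [MeasurableSpace G] [BorelSpace G]
    (ν : Measure G) [ν.IsHaarMeasure]
    (K : Subgroup G) (hK : IsCompact (K : Set G))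
    (lam : Measure (G ⧸ K))
    (hlam : ν.map (QuotientGroup.mk : G → G ⧸ K) = lam)
    (A : ℕ → G ≃ₜ G)
    (hAhom : ∀ j, ∀ x y : G, A j (x * y) = A j x * A j y)
    (hAK : ∀ j, (A j : G → G) '' (K : Set G) = (K : Set G))
    (Adot : ℕ → G ⧸ K → G ⧸ K)
    (hAdot : ∀ j (x : G), Adot j (QuotientGroup.mk x) = QuotientGroup.mk (A j x))
    (hAdotmeas : ∀ j, Measurable (Adot j))
    (modA : ℕ → ℝ) (hmodpos : ∀ j, 0 < modA j)
    (hmod : ∀ j, ∀ s : Set G, MeasurableSet s →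
      ν ((A j : G → G) '' s) = ENNReal.ofReal (modA j) * ν s)
    (Φ : ℕ → ℝ) (p : ℝ≥0) (hp : 1 ≤ p)
    (hfin : Summable (fun j => |Φ j| * (modA j) ^ (-(1 / (p : ℝ))))) :
    ∀ f : G ⧸ K → ℝ, MemLp f p lam →
      eLpNorm (fun x => ∑' j, Φ j * f (Adot j x)) p lam ≤
        ENNReal.ofReal (∑' j, |Φ j| * (modA j) ^ (-(1 / (p : ℝ)))) *
          eLpNorm f p lam := by
  intro f hf
  have hpR : (1:ℝ) ≤ (p : ℝ) := by exact_mod_cast hp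
  have hp0 : (0:ℝ) < (p : ℝ) := lt_of_lt_of_le one_pos hpR
  have hpne : (p : ℝ≥0∞) ≠ 0 := by
    simp only [ne_eq, ENNReal.coe_eq_zero]
    exact_mod_cast hp0.ne'
  have hptop : (p : ℝ≥0∞) ≠ ∞ := ENNReal.coe_ne_top
  have hpr : ((p : ℝ≥0∞)).toReal = (p : ℝ) := ENNReal.coe_toReal p
  set c : ℕ → ℝ≥0∞ := fun j => (ENNReal.ofReal (modA j))⁻¹ with hc
  -- Step 1: pushforward of Haar measure by A j
  have hmapA : ∀ j, ν.map (A j) = c j • ν := by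
    intro j
    ext s hs
    rw [Measure.map_apply (A j).continuous.measurable hs, Measure.smul_apply, smul_eq_mul]
    have h1 := hmod j ((A j : G → G) ⁻¹' s) (hs.preimage (A j).continuous.measurable)
    rw [(A j).surjective.image_preimage] at h1
    rw [h1, ← mul_assoc, ENNReal.inv_mul_cancel (by simpa using hmodpos j)
      ENNReal.ofReal_ne_top, one_mul]
  have hmkmeas : Measurable (QuotientGroup.mk : G → G ⧸ K) := fun _ h => h
  -- Step 2: pushforward of lam by Adot j
  have hmap : ∀ j, lam.map (Adot j) = c j • lam := by
    intro j
    rw [← hlam, Measure.map_map (hAdotmeas j) hmkmeas]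
    have hcomp : (Adot j) ∘ (QuotientGroup.mk : G → G ⧸ K)
        = (QuotientGroup.mk : G → G ⧸ K) ∘ (A j) := funext fun x => hAdot j x
    rw [hcomp, ← Measure.map_map hmkmeas (A j).continuous.measurable, hmapA j,
      Measure.map_smul]
  have hac : ∀ j, lam.map (Adot j) ≪ lam := by
    intro j
    rw [hmap j]
    refine Measure.AbsolutelyContinuous.mk fun s hs h0 => ?_
    simp [h0]
  have hqmp : ∀ j, Measure.QuasiMeasurePreserving (Adot j) lam lam :=
    fun j => ⟨hAdotmeas j, hac j⟩
  have hterm_meas : ∀ j, AEStronglyMeasurable (fun x => Φ j * f (Adot j x)) lam :=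
    fun j => (hf.1.comp_quasiMeasurePreserving (hqmp j)).const_mul (Φ j)
  -- Step 3: per-term eLpNorm computation
  have hterm : ∀ j, eLpNorm (fun x => Φ j * f (Adot j x)) p lam
      = ENNReal.ofReal (|Φ j| * modA j ^ (-(1 / (p : ℝ)))) * eLpNorm f p lam := by
    intro j
    have h1 : (fun x => Φ j * f (Adot j x)) = (Φ j) • (f ∘ Adot j) := rfl
    rw [h1, eLpNorm_const_smul]
    have hfm : AEStronglyMeasurable f (lam.map (Adot j)) := by
      refine hf.1.mono_ac ?_
      exact (hac j).trans (Measure.AbsolutelyContinuous.refl lam) |>.trans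
        (Measure.AbsolutelyContinuous.refl lam)
    have h2 : eLpNorm (f ∘ Adot j) p lam = eLpNorm f p (lam.map (Adot j)) :=
      (eLpNorm_map_measure hfm (hAdotmeas j).aemeasurable).symm
    rw [h2, hmap j, eLpNorm_smul_measure_of_ne_top hptop, smul_eq_mul, ← mul_assoc]
    congr 1
    have htr : ((1 : ℝ≥0∞) / (p : ℝ≥0∞)).toReal = 1 / (p : ℝ) := by
      rw [ENNReal.toReal_div, ENNReal.toReal_one, hpr]
    rw [htr, hc]
    rw [ENNReal.inv_rpow, ← ENNReal.rpow_neg, ENNReal.ofReal_rpow_of_pos (hmodpos j),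
      Real.enorm_eq_ofReal_abs, ← ENNReal.ofReal_mul (abs_nonneg _)]
  -- Step 4: pointwise bound on the sum
  set g : ℕ → G ⧸ K → ℝ≥0∞ := fun j x => (‖Φ j * f (Adot j x)‖₊ : ℝ≥0∞) with hg
  have hgmeas : ∀ j, AEMeasurable (g j) lam := fun j => (hterm_meas j).enorm
  have hF : ∀ x, (‖∑' j, Φ j * f (Adot j x)‖₊ : ℝ≥0∞) ≤ ∑' j, g j x := by
    intro x
    by_cases hs : Summable fun j => ‖Φ j * f (Adot j x)‖₊
    · calc (‖∑' j, Φ j * f (Adot j x)‖₊ : ℝ≥0∞)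
          ≤ ((∑' j, ‖Φ j * f (Adot j x)‖₊ : ℝ≥0) : ℝ≥0∞) :=
            ENNReal.coe_le_coe.2 (nnnorm_tsum_le hs)
        _ = ∑' j, g j x := ENNReal.coe_tsum hs
    · have : (∑' j, g j x) = ∞ := by
        by_contra h
        exact hs (ENNReal.tsum_coe_ne_top_iff_summable.1 h)
      rw [this]; exact le_top
  -- Step 5: main estimate
  have hmain : eLpNorm (fun x => ∑' j, Φ j * f (Adot j x)) p lam ≤
      ∑' j, eLpNorm (fun x => Φ j * f (Adot j x)) p lam := by
    rw [eLpNorm_eq_lintegral_rpow_enorm_toReal hpne hptop, hpr]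
    calc (∫⁻ x, (‖∑' j, Φ j * f (Adot j x)‖₊ : ℝ≥0∞) ^ (p : ℝ) ∂lam) ^ (1 / (p : ℝ))
        ≤ (∫⁻ x, (∑' j, g j x) ^ (p : ℝ) ∂lam) ^ (1 / (p : ℝ)) := by
          gcongr with x
          · exact hF x
      _ ≤ ∑' j, (∫⁻ x, (g j x) ^ (p : ℝ) ∂lam) ^ (1 / (p : ℝ)) :=
          lintegral_Lp_tsum_le' hpR g hgmeas
      _ = ∑' j, eLpNorm (fun x => Φ j * f (Adot j x)) p lam := by
          congr 1; funext j
          rw [eLpNorm_eq_lintegral_rpow_enorm_toReal hpne hptop, hpr]; rfl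
  calc eLpNorm (fun x => ∑' j, Φ j * f (Adot j x)) p lam
      ≤ ∑' j, eLpNorm (fun x => Φ j * f (Adot j x)) p lam := hmain
    _ = ∑' j, ENNReal.ofReal (|Φ j| * modA j ^ (-(1 / (p : ℝ)))) * eLpNorm f p lam := by
        congr 1; funext j; exact hterm j
    _ = (∑' j, ENNReal.ofReal (|Φ j| * modA j ^ (-(1 / (p : ℝ))))) * eLpNorm f p lam :=
        ENNReal.tsum_mul_right
    _ = ENNReal.ofReal (∑' j, |Φ j| * modA j ^ (-(1 / (p : ℝ)))) * eLpNorm f p lam := by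
        rw [ENNReal.ofReal_tsum_of_nonneg
          (fun j => mul_nonneg (abs_nonneg _) (Real.rpow_nonneg (hmodpos j).le _)) hfin]
end
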